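/- Let G be a finite abelian p-group, n, w positive integers, and B a Haar-uniform random n×n band matrix over Z_p with band width w (i.e., uniform on the set of matrices with B(i,j)=0 whenever |i-j|>w). For a fixed vector g in G^n (extended by zeros outside [1,n]), define H_g(k) = ⟨g(j) : k-w ≤ j ≤ k+w⟩ ≤ G for k in [1,n]. Then P(B g = 0) = ∏_{k=1}^n |H_g(k)|^{-1}. -/
import Mathlib
open MeasureTheory
open scoped ENNReal

private lemma exp_exists {p : ℕ} (G : Type*) [AddCommMonoid G] [Fintype G]
    (hG : ∀ g : G, ∃ k : ℕ, (p ^ k : ℕ) • g = 0) :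
    ∃ K : ℕ, ∀ x : G, (p ^ K : ℕ) • x = 0 := by
  classical
  refine ⟨Finset.univ.sup fun x : G => (hG x).choose, fun x => ?_⟩
  have hx := (hG x).choose_spec
  have hle : (hG x).choose ≤ Finset.univ.sup fun x : G => (hG x).choose :=
    Finset.le_sup (f := fun x : G => (hG x).choose) (Finset.mem_univ x)
  obtain ⟨m, hm⟩ := Nat.exists_eq_add_of_le hle
  rw [hm, pow_add, mul_comm, mul_smul, hx, smul_zero]

private lemma smul_congr' {p : ℕ} [Fact p.Prime] {G : Type*} [AddCommGroup G] [Module ℤ_[p] G]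
    {K : ℕ} (hK : ∀ x : G, (p ^ K : ℕ) • x = 0) (a : ℤ_[p]) (x : G) :
    a • x = ((PadicInt.toZModPow K a).val : ℕ) • x := by
  haveI : NeZero (p ^ K) := ⟨pow_ne_zero _ (Fact.out (p := p.Prime)).ne_zero⟩
  have h : a - (((PadicInt.toZModPow K a).val : ℕ) : ℤ_[p])
      ∈ Ideal.span {(p : ℤ_[p]) ^ K} := by
    rw [← PadicInt.ker_toZModPow, RingHom.mem_ker, map_sub, map_natCast, ZMod.natCast_val,
      ZMod.cast_id, sub_self]
  obtain ⟨u, hu⟩ := Ideal.mem_span_singleton'.mp h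
  have h0 : (a - (((PadicInt.toZModPow K a).val : ℕ) : ℤ_[p])) • x = 0 := by
    rw [← hu, mul_smul]
    have : (p : ℤ_[p]) ^ K • x = 0 := by
      rw [← Nat.cast_pow, Nat.cast_smul_eq_nsmul, hK]
    rw [this, smul_zero]
  rw [sub_smul, sub_eq_zero] at h0
  rw [h0, Nat.cast_smul_eq_nsmul]

private lemma fiber_eq_ball {p : ℕ} [Fact p.Prime] (K : ℕ) (r : ZMod (p ^ K)) :
    {b : ℤ_[p] | PadicInt.toZModPow K b = r} =
      Metric.closedBall ((r.val : ℕ) : ℤ_[p]) ((p : ℝ) ^ (-(K : ℤ))) := by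
  haveI : NeZero (p ^ K) := ⟨pow_ne_zero _ (Fact.out (p := p.Prime)).ne_zero⟩
  ext b
  simp only [Set.mem_setOf_eq, Metric.mem_closedBall, dist_eq_norm]
  rw [PadicInt.norm_le_pow_iff_mem_span_pow, ← PadicInt.ker_toZModPow, RingHom.mem_ker,
    map_sub, map_natCast, sub_eq_zero, ZMod.natCast_val, ZMod.cast_id]

theorem stmt2 (p : ℕ) [Fact p.Prime] (n w : ℕ) (hn : 0 < n) (hw : 0 < w)
    (G : Type*) [AddCommGroup G] [Module ℤ_[p] G] [Fintype G]
    (hG : ∀ g : G, ∃ k : ℕ, (p ^ k : ℕ) • g = 0)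
    [MeasurableSpace (Matrix (Fin n) (Fin n) ℤ_[p])]
    [BorelSpace (Matrix (Fin n) (Fin n) ℤ_[p])]
    (μ : Measure (Matrix (Fin n) (Fin n) ℤ_[p])) [IsProbabilityMeasure μ]
    (hsupp : μ {B | ¬ ∀ i j : Fin n, (w : ℤ) < |(i : ℤ) - (j : ℤ)| → B i j = 0} = 0)
    (hinv : ∀ C : Matrix (Fin n) (Fin n) ℤ_[p],
      (∀ i j : Fin n, (w : ℤ) < |(i : ℤ) - (j : ℤ)| → C i j = 0) →
      μ.map (fun B => B + C) = μ)
    (g : Fin n → G) :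
    μ {B | ∀ i : Fin n, ∑ j : Fin n, B i j • g j = 0}
      = ∏ k : Fin n,
          (Nat.card (AddSubgroup.closure
            (g '' {j : Fin n | |(j : ℤ) - (k : ℤ)| ≤ (w : ℤ)})) : ℝ≥0∞)⁻¹ := by
  classical
  obtain ⟨K, hK⟩ := exp_exists (p := p) G hG
  set φ : Matrix (Fin n) (Fin n) ℤ_[p] → (Fin n → G) := fun B i => ∑ j, B i j • g j with hφ
  have φ_add : ∀ B C : Matrix (Fin n) (Fin n) ℤ_[p], φ (B + C) = φ B + φ C := by
    intro B C
    funext i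
    simp only [hφ, Matrix.add_apply, Pi.add_apply, add_smul, Finset.sum_add_distrib]
  set S : Set (Matrix (Fin n) (Fin n) ℤ_[p]) := {B | ∀ i j : Fin n, (w : ℤ) < |(i : ℤ) - (j : ℤ)| → B i j = 0} with hS
  -- measurability of the fibers of φ
  have measA : ∀ h : Fin n → G, MeasurableSet {B : Matrix (Fin n) (Fin n) ℤ_[p] | φ B = h} := by
    intro h
    have : {B : Matrix (Fin n) (Fin n) ℤ_[p] | φ B = h} = ⋂ i, {B : Matrix (Fin n) (Fin n) ℤ_[p] | φ B i = h i} := by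
      ext B
      simp [funext_iff]
    rw [this]
    refine MeasurableSet.iInter fun i => ?_
    set F : (Fin n → ZMod (p ^ K)) → G := fun v => ∑ j, ((v j).val : ℕ) • g j with hF
    have hrepr : ∀ B : Matrix (Fin n) (Fin n) ℤ_[p], φ B i = F (fun j => PadicInt.toZModPow K (B i j)) := by
      intro B
      simp only [hφ, hF]
      exact Finset.sum_congr rfl fun j _ => smul_congr' hK _ _
    have : {B : Matrix (Fin n) (Fin n) ℤ_[p] | φ B i = h i}
        = ⋃ (v : Fin n → ZMod (p ^ K)) (_ : F v = h i),
            ⋂ j, {B : Matrix (Fin n) (Fin n) ℤ_[p] | PadicInt.toZModPow K (B i j) = v j} := by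
      ext B
      simp only [Set.mem_setOf_eq, Set.mem_iUnion, Set.mem_iInter]
      constructor
      · intro hB
        exact ⟨fun j => PadicInt.toZModPow K (B i j), by rw [← hrepr B, hB], fun j => rfl⟩
      · rintro ⟨v, hv, hvB⟩
        rw [hrepr B]
        have : (fun j => PadicInt.toZModPow K (B i j)) = v := funext hvB
        rw [this, hv]
    rw [this]
    refine MeasurableSet.iUnion fun v => MeasurableSet.iUnion fun _ =>
      MeasurableSet.iInter fun j => ?_
    have hcont : Continuous fun B : Matrix (Fin n) (Fin n) ℤ_[p] => B i j :=
      (continuous_apply j).comp (continuous_apply i)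
    have hs : {B : Matrix (Fin n) (Fin n) ℤ_[p] | PadicInt.toZModPow K (B i j) = v j}
        = (fun B : Matrix (Fin n) (Fin n) ℤ_[p] => B i j) ⁻¹' {b : ℤ_[p] | PadicInt.toZModPow K b = v j} := rfl
    rw [hs, fiber_eq_ball]
    exact (Metric.isClosed_closedBall.preimage hcont).measurableSet
  -- translation invariance of fiber measures
  have key : ∀ C : Matrix (Fin n) (Fin n) ℤ_[p], C ∈ S → ∀ h : Fin n → G,
      μ {B : Matrix (Fin n) (Fin n) ℤ_[p] | φ B = h + φ C} = μ {B : Matrix (Fin n) (Fin n) ℤ_[p] | φ B = h} := by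
    intro C hC h
    have hmap := hinv C hC
    have hmeas : Measurable fun B : Matrix (Fin n) (Fin n) ℤ_[p] => B + C :=
      (continuous_id.add continuous_const).measurable
    calc μ {B : Matrix (Fin n) (Fin n) ℤ_[p] | φ B = h + φ C}
        = μ.map (fun B : Matrix (Fin n) (Fin n) ℤ_[p] => B + C) {B : Matrix (Fin n) (Fin n) ℤ_[p] | φ B = h + φ C} := by rw [hmap]
      _ = μ ((fun B : Matrix (Fin n) (Fin n) ℤ_[p] => B + C) ⁻¹' {B : Matrix (Fin n) (Fin n) ℤ_[p] | φ B = h + φ C}) :=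
          Measure.map_apply hmeas (measA _)
      _ = μ {B : Matrix (Fin n) (Fin n) ℤ_[p] | φ B = h} := by
          congr 1
          ext B
          simp only [Set.mem_preimage, Set.mem_setOf_eq, φ_add, add_left_inj]
  -- the set of achievable values
  set 𝓗 : Finset (Fin n → G) := Finset.univ.filter (fun h => ∃ C ∈ S, φ C = h) with h𝓗
  have h0mem : (0 : Fin n → G) ∈ 𝓗 := by
    refine Finset.mem_filter.mpr ⟨Finset.mem_univ _, 0, fun i j _ => rfl, ?_⟩
    funext i
    simp [hφ]
  have hallsame : ∀ h ∈ 𝓗, μ {B : Matrix (Fin n) (Fin n) ℤ_[p] | φ B = h} = μ {B : Matrix (Fin n) (Fin n) ℤ_[p] | φ B = 0} := by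
    intro h hh
    obtain ⟨C, hC, hCh⟩ := (Finset.mem_filter.mp hh).2
    have := key C hC 0
    rw [zero_add, hCh] at this
    exact this
  -- μ S = 1
  have hμS : μ S = 1 := by
    have hcompl : Sᶜ = {B : Matrix (Fin n) (Fin n) ℤ_[p] |
        ¬ ∀ i j : Fin n, (w : ℤ) < |(i : ℤ) - (j : ℤ)| → B i j = 0} := by
      ext B; simp [hS]
    have hle : (1 : ℝ≥0∞) ≤ μ S + μ Sᶜ := by
      rw [← measure_univ (μ := μ), ← Set.union_compl_self S]
      exact measure_union_le _ _
    rw [hcompl, hsupp, add_zero] at hle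
    exact le_antisymm prob_le_one hle
  -- partition of S by fibers of φ
  have hdisj : (↑𝓗 : Set (Fin n → G)).PairwiseDisjoint
      (fun h => {B : Matrix (Fin n) (Fin n) ℤ_[p] | φ B = h}) := by
    intro a _ b _ hab
    refine Set.disjoint_left.mpr ?_
    rintro B ha hb
    simp only [Set.mem_setOf_eq] at ha hb
    exact hab (ha.symm.trans hb)
  have hsum : ∑ h ∈ 𝓗, μ {B : Matrix (Fin n) (Fin n) ℤ_[p] | φ B = h}
      = μ (⋃ h ∈ 𝓗, {B : Matrix (Fin n) (Fin n) ℤ_[p] | φ B = h}) :=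
    (measure_biUnion_finset hdisj fun h _ => measA h).symm
  have hcover : S ⊆ ⋃ h ∈ 𝓗, {B : Matrix (Fin n) (Fin n) ℤ_[p] | φ B = h} := by
    intro B hB
    exact Set.mem_biUnion (Finset.mem_filter.mpr ⟨Finset.mem_univ _, B, hB, rfl⟩) rfl
  have hone : μ (⋃ h ∈ 𝓗, {B : Matrix (Fin n) (Fin n) ℤ_[p] | φ B = h}) = 1 :=
    le_antisymm prob_le_one (hμS ▸ measure_mono hcover)
  have hcardmul : (𝓗.card : ℝ≥0∞) * μ {B : Matrix (Fin n) (Fin n) ℤ_[p] | φ B = 0} = 1 := by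
    rw [← hone, ← hsum, Finset.sum_congr rfl hallsame, Finset.sum_const, nsmul_eq_mul]
  have hc0 : (𝓗.card : ℝ≥0∞) ≠ 0 := by
    exact_mod_cast Finset.card_ne_zero_of_mem h0mem
  have hct : (𝓗.card : ℝ≥0∞) ≠ ⊤ := ENNReal.natCast_ne_top _
  have hA0 : μ {B : Matrix (Fin n) (Fin n) ℤ_[p] | φ B = 0} = (𝓗.card : ℝ≥0∞)⁻¹ := by
    calc μ {B : Matrix (Fin n) (Fin n) ℤ_[p] | φ B = 0}
        = ((𝓗.card : ℝ≥0∞)⁻¹ * (𝓗.card : ℝ≥0∞))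
            * μ {B : Matrix (Fin n) (Fin n) ℤ_[p] | φ B = 0} := by
          rw [ENNReal.inv_mul_cancel hc0 hct, one_mul]
      _ = (𝓗.card : ℝ≥0∞)⁻¹ := by rw [mul_assoc, hcardmul, mul_one]
  -- description of the achievable values as a product set
  set V : Fin n → Set G := fun i => {x | ∃ c : Fin n → ℤ_[p],
    (∀ j : Fin n, (w : ℤ) < |(i : ℤ) - (j : ℤ)| → c j = 0) ∧ ∑ j, c j • g j = x} with hV
  have V_zero : ∀ i, (0 : G) ∈ V i := fun i => ⟨0, fun j _ => rfl, by simp⟩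
  have V_add : ∀ i, ∀ x y : G, x ∈ V i → y ∈ V i → x + y ∈ V i := by
    rintro i x y ⟨c, hc, rfl⟩ ⟨d, hd, rfl⟩
    exact ⟨c + d, fun j hj => by simp [hc j hj, hd j hj],
      by simp [add_smul, Finset.sum_add_distrib]⟩
  have V_neg : ∀ i, ∀ x : G, x ∈ V i → -x ∈ V i := by
    rintro i x ⟨c, hc, rfl⟩
    refine ⟨-c, fun j hj => by simp [hc j hj], ?_⟩
    simp [neg_smul, Finset.sum_neg_distrib]
  have hVeq : ∀ i : Fin n, V i
      = ↑(AddSubgroup.closure (g '' {j : Fin n | |(j : ℤ) - (i : ℤ)| ≤ (w : ℤ)})) := by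
    intro i
    apply Set.Subset.antisymm
    · rintro x ⟨c, hc, rfl⟩
      refine AddSubgroup.sum_mem _ fun j _ => ?_
      by_cases hj : (w : ℤ) < |(i : ℤ) - (j : ℤ)|
      · rw [hc j hj, zero_smul]; exact zero_mem _
      · have hmem : g j ∈ g '' {j : Fin n | |(j : ℤ) - (i : ℤ)| ≤ (w : ℤ)} :=
          ⟨j, by rw [Set.mem_setOf_eq, abs_sub_comm]; exact not_lt.mp hj, rfl⟩
        have hcl := AddSubgroup.subset_closure hmem
        rw [smul_congr' hK]
        exact AddSubgroup.nsmul_mem _ hcl _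
    · let W : AddSubgroup G :=
        { carrier := V i, zero_mem' := V_zero i,
          add_mem' := fun hx hy => V_add i _ _ hx hy,
          neg_mem' := fun hx => V_neg i _ hx }
      have hle : AddSubgroup.closure (g '' {j : Fin n | |(j : ℤ) - (i : ℤ)| ≤ (w : ℤ)}) ≤ W := by
        rw [AddSubgroup.closure_le]
        rintro x ⟨j, hj, rfl⟩
        refine ⟨Pi.single j (1 : ℤ_[p]), fun j' hj' => ?_, ?_⟩
        · have hne : j' ≠ j := by
            rintro rfl
            rw [Set.mem_setOf_eq] at hj
            rw [abs_sub_comm] at hj'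
            exact absurd hj (not_le.mpr hj')
          exact Pi.single_eq_of_ne hne 1
        · rw [Finset.sum_eq_single j]
          · rw [Pi.single_eq_same, one_smul]
          · intro b _ hb; rw [Pi.single_eq_of_ne hb, zero_smul]
          · intro hj'; exact absurd (Finset.mem_univ j) hj'
      exact fun x hx => hle hx
  have h𝓗pi : (↑𝓗 : Set (Fin n → G)) = Set.pi Set.univ V := by
    ext h
    simp only [h𝓗, Finset.coe_filter, Finset.mem_univ, true_and, Set.mem_setOf_eq,
      Set.mem_pi, Set.mem_univ, forall_true_left]
    constructor
    · rintro ⟨C, hC, rfl⟩ i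
      exact ⟨C i, fun j hj => hC i j hj, rfl⟩
    · intro hh
      choose c hc1 hc2 using hh
      exact ⟨fun i j => c i j, fun i j hj => hc1 i j hj, funext fun i => hc2 i⟩
  have hcard : 𝓗.card = ∏ k : Fin n, Nat.card
      (AddSubgroup.closure (g '' {j : Fin n | |(j : ℤ) - (k : ℤ)| ≤ (w : ℤ)})) := by
    have h1 : 𝓗.card = Nat.card (↑𝓗 : Set (Fin n → G)) := by
      rw [Nat.card_coe_set_eq, Set.ncard_coe_finset]
    rw [h1, h𝓗pi, Nat.card_congr (Equiv.Set.univPi V), Nat.card_pi]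
    refine Finset.prod_congr rfl fun k _ => ?_
    rw [hVeq k]
    simp [SetLike.coe_sort_coe]
  have hpos : ∀ k : Fin n, (Nat.card
      (AddSubgroup.closure (g '' {j : Fin n | |(j : ℤ) - (k : ℤ)| ≤ (w : ℤ)})) : ℝ≥0∞) ≠ 0 := by
    intro k
    exact_mod_cast Nat.card_pos.ne'
  have hRHS : ∏ k : Fin n, (Nat.card (AddSubgroup.closure
        (g '' {j : Fin n | |(j : ℤ) - (k : ℤ)| ≤ (w : ℤ)})) : ℝ≥0∞)⁻¹
      = (𝓗.card : ℝ≥0∞)⁻¹ := by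
    rw [← ENNReal.prod_inv_distrib (fun i _ j _ _ => Or.inl (hpos i))]
    rw [← Nat.cast_prod, ← hcard]
  have hLHS : {B : Matrix (Fin n) (Fin n) ℤ_[p] | ∀ i : Fin n, ∑ j : Fin n, B i j • g j = 0}
      = {B : Matrix (Fin n) (Fin n) ℤ_[p] | φ B = 0} := by
    ext B
    simp [hφ, funext_iff]
  rw [hLHS, hA0, hRHS]
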